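/- Let A ∈ ℤ^{m×d} with ker_ℤ(A) ∩ ℕ^d = {0}, 𝓜 a Markov basis for A, and (b_i) a sequence in ℕA. Suppose there exists r ∈ ℕ such that |𝓕_{A,b_i}| ∈ Ω(i^r) and |𝓜^{b_i}| ∈ O(i^r), where 𝓜^{b} = 𝓜(diam(𝓕_{A,b}(𝓜))) is the adaptation of the Markov basis by all ℤ-linear combinations with coefficient ℓ_1-norm at most the diameter. Then the sequence of fiber graphs (𝓕_{A,b_i}(𝓜^{b_i}))_i is an expander: the SLEM of the simple walk on 𝓕_{A,b_i}(𝓜^{b_i}) equals 1 − |𝓕_{A,b_i}|/|𝓜^{b_i}| (assuming 𝓜^{b_i} taken with signs so that the fiber graph is complete with loops), which is bounded away from 1 uniformly in i. -/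

import Mathlib

open scoped Classical

/-- The fiber of `b` under `A`. -/
def fiberE (m d : ℕ) (A : Matrix (Fin m) (Fin d) ℤ) (b : Fin m → ℤ) : Set (Fin d → ℤ) :=
  {u | (∀ j, 0 ≤ u j) ∧ A.mulVec u = b}

/-- One step of the fiber walk on `F` using moves `±Mset`. -/
def stepRelE (d : ℕ) (F Mset : Set (Fin d → ℤ)) (x y : Fin d → ℤ) : Prop :=
  x ∈ F ∧ y ∈ F ∧ (y - x ∈ Mset ∨ x - y ∈ Mset)

/-- Graph distance in the fiber graph on `F` with moves `±Mset`. -/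
noncomputable def walkDistE (d : ℕ) (F Mset : Set (Fin d → ℤ)) (u v : Fin d → ℤ) : ℕ :=
  sInf {n : ℕ | ∃ f : ℕ → (Fin d → ℤ), f 0 = u ∧ f n = v ∧
    ∀ t < n, stepRelE d F Mset (f t) (f (t + 1))}

/-- Diameter of the fiber graph on `F` with moves `±Mset`. -/
noncomputable def walkDiamE (d : ℕ) (F Mset : Set (Fin d → ℤ)) : ℕ :=
  sSup {n : ℕ | ∃ u ∈ F, ∃ v ∈ F, n = walkDistE d F Mset u v}

/-- `𝓜(l)`: all `ℤ`-linear combinations of the moves with coefficient `ℓ¹`-norm at most `l`. -/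
def Mpow (d k : ℕ) (mv : Fin k → (Fin d → ℤ)) (l : ℕ) : Set (Fin d → ℤ) :=
  {v | ∃ lam : Fin k → ℤ, (∑ j, |lam j|) ≤ (l : ℤ) ∧ v = ∑ j, lam j • mv j}

/-- The transition operator of the simple walk on the fiber graph `F(pm)`. -/
noncomputable def walkOpE (d : ℕ) (F : Set (Fin d → ℤ)) (pm : Finset (Fin d → ℤ))
    (f : (Fin d → ℤ) → ℝ) (u : Fin d → ℤ) : ℝ :=
  (pm.card : ℝ)⁻¹ * ∑ mvv ∈ pm, (if u + mvv ∈ F then f (u + mvv) else f u)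

/-- `μ` is an eigenvalue of the simple walk on the fiber graph. -/
def isEigenE (d : ℕ) (F : Set (Fin d → ℤ)) (pm : Finset (Fin d → ℤ)) (μ : ℝ) : Prop :=
  ∃ f : (Fin d → ℤ) → ℝ, (∃ u ∈ F, f u ≠ 0) ∧ (∀ u, u ∉ F → f u = 0) ∧
    ∀ u ∈ F, walkOpE d F pm f u = μ * f u

/-- The second largest eigenvalue modulus of the simple walk on the fiber graph. -/
noncomputable def slemE (d : ℕ) (F : Set (Fin d → ℤ)) (pm : Finset (Fin d → ℤ)) : ℝ :=
  sSup {x : ℝ | ∃ μ : ℝ, isEigenE d F pm μ ∧ μ ≠ 1 ∧ x = |μ|}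


lemma fiberE_finite {m d : ℕ} {A : Matrix (Fin m) (Fin d) ℤ}
    (hker : ∀ u : Fin d → ℤ, A.mulVec u = 0 → (∀ j, 0 ≤ u j) → u = 0)
    (b : Fin m → ℤ) : (fiberE m d A b).Finite := by
  by_contra h
  have h' : (fiberE m d A b).Infinite := h
  let s := h'.natEmbedding
  let g : ℕ → (Fin d →₀ ℕ) := fun i =>
    Finsupp.equivFunOnFinite.symm (fun j => ((s i : Fin d → ℤ) j).toNat)
  obtain ⟨m0, n0, hmn, hle⟩ :=
    wellQuasiOrdered_le g
  have hle' : ∀ j, ((s m0 : Fin d → ℤ) j).toNat ≤ ((s n0 : Fin d → ℤ) j).toNat := by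
    intro j
    have := Finsupp.le_def.mp hle j
    simpa [g, Finsupp.coe_equivFunOnFinite_symm] using this
  obtain ⟨hpos_m, heq_m⟩ := (s m0).2
  obtain ⟨hpos_n, heq_n⟩ := (s n0).2
  have hnonneg : ∀ j, 0 ≤ ((s n0 : Fin d → ℤ) - (s m0 : Fin d → ℤ)) j := by
    intro j
    have h1 := hle' j
    have h2 := hpos_m j
    have h3 := hpos_n j
    simp only [Pi.sub_apply]
    omega
  have hker0 : A.mulVec ((s n0 : Fin d → ℤ) - (s m0 : Fin d → ℤ)) = 0 := by
    rw [Matrix.mulVec_sub, heq_n, heq_m, sub_self]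
  have hz := hker _ hker0 hnonneg
  have : (s n0 : Fin d → ℤ) = (s m0 : Fin d → ℤ) := by
    have := sub_eq_zero.mp hz
    exact this
  exact absurd (s.injective (Subtype.ext this)) (by omega)

lemma Mpow_zero_mem (d k : ℕ) (mv : Fin k → (Fin d → ℤ)) (l : ℕ) :
    (0 : Fin d → ℤ) ∈ Mpow d k mv l :=
  ⟨0, by simp, by simp⟩

lemma Mpow_mono (d k : ℕ) (mv : Fin k → (Fin d → ℤ)) {l l' : ℕ} (h : l ≤ l') :
    Mpow d k mv l ⊆ Mpow d k mv l' := by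
  rintro v ⟨lam, hlam, rfl⟩
  exact ⟨lam, hlam.trans (by exact_mod_cast h), rfl⟩

lemma Mpow_add_move {d k : ℕ} {mv : Fin k → (Fin d → ℤ)} {l : ℕ} {w c : Fin d → ℤ}
    (hw : w ∈ Mpow d k mv l) (hc : ∃ j, c = mv j ∨ c = -mv j) :
    w + c ∈ Mpow d k mv (l + 1) := by
  classical
  obtain ⟨lam, hlam, rfl⟩ := hw
  obtain ⟨j, hj⟩ := hc
  obtain ⟨e, he, hec⟩ : ∃ e : ℤ, |e| = 1 ∧ c = e • mv j := by
    rcases hj with hj | hj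
    · exact ⟨1, by norm_num, by simp [hj]⟩
    · exact ⟨-1, by norm_num, by simp [hj]⟩
  set sg : Fin k → ℤ := fun i => if i = j then e else 0 with hsg
  refine ⟨fun i => lam i + sg i, ?_, ?_⟩
  · have hsingle : ∑ i, |sg i| = 1 := by
      have h1 : ∀ i, |sg i| = if i = j then (1:ℤ) else 0 := by
        intro i
        rcases eq_or_ne i j with rfl | hij
        · simp [hsg, he]
        · simp [hsg, hij]
      rw [Finset.sum_congr rfl (fun i _ => h1 i), Finset.sum_ite_eq' Finset.univ j (fun _ => (1:ℤ))]
      simp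
    calc ∑ i, |lam i + sg i| ≤ ∑ i, (|lam i| + |sg i|) :=
          Finset.sum_le_sum fun i _ => abs_add_le _ _
      _ = (∑ i, |lam i|) + ∑ i, |sg i| := Finset.sum_add_distrib
      _ ≤ (l : ℤ) + 1 := by rw [hsingle]; exact add_le_add_left hlam 1
      _ = ((l + 1 : ℕ) : ℤ) := by push_cast; ring
  · have hsum : ∑ i, (sg i) • mv i = e • mv j := by
      have h1 : ∀ i, sg i • mv i = if i = j then e • mv j else 0 := by
        intro i
        rcases eq_or_ne i j with rfl | hij
        · simp [hsg]
        · simp [hsg, hij]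
      rw [Finset.sum_congr rfl (fun i _ => h1 i), Finset.sum_ite_eq' Finset.univ j (fun _ => e • mv j)]
      simp
    have h2 : ∑ i, (lam i + sg i) • mv i
        = (∑ i, lam i • mv i) + ∑ i, (sg i) • mv i := by
      rw [← Finset.sum_add_distrib]
      exact Finset.sum_congr rfl fun i _ => by simp [add_smul]
    rw [h2, hsum, hec]

lemma rtg_path {d : ℕ} {F M : Set (Fin d → ℤ)} {u v : Fin d → ℤ}
    (h : Relation.ReflTransGen (stepRelE d F M) u v) :
    ∃ n, ∃ f : ℕ → (Fin d → ℤ), f 0 = u ∧ f n = v ∧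
      ∀ t < n, stepRelE d F M (f t) (f (t + 1)) := by
  induction h with
  | refl => exact ⟨0, fun _ => u, rfl, rfl, fun t ht => absurd ht (Nat.not_lt_zero t)⟩
  | @tail w c hab hbc ih =>
    obtain ⟨n, f, hf0, hfn, hstep⟩ := ih
    refine ⟨n + 1, fun t => if t ≤ n then f t else c, ?_, ?_, ?_⟩
    · simp [hf0]
    · simp
    · intro t ht
      rcases Nat.lt_or_ge t n with h1 | h1
      · have : t ≤ n := le_of_lt h1
        have h2 : t + 1 ≤ n := h1
        simpa [this, h2] using hstep t h1
      · have ht' : t = n := by omega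
        subst ht'
        have h3 : ¬ (t + 1 ≤ t) := by omega
        simpa [h3, hfn] using hbc

lemma path_mem_Mpow {d k : ℕ} {mv : Fin k → (Fin d → ℤ)} {F : Set (Fin d → ℤ)} :
    ∀ (n : ℕ) (f : ℕ → (Fin d → ℤ)),
      (∀ t < n, stepRelE d F (Set.range mv) (f t) (f (t + 1))) →
      f n - f 0 ∈ Mpow d k mv n := by
  intro n
  induction n with
  | zero => intro f _; simpa using Mpow_zero_mem d k mv 0
  | succ n ih =>
    intro f hstep
    have h1 := ih f (fun t ht => hstep t (ht.trans (Nat.lt_succ_self n)))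
    have h2 := hstep n (Nat.lt_succ_self n)
    have heq : f (n + 1) - f 0 = (f n - f 0) + (f (n + 1) - f n) := by ring
    rw [heq]
    apply Mpow_add_move h1
    rcases h2.2.2 with h | h
    · obtain ⟨j, hj⟩ := h; exact ⟨j, Or.inl hj.symm⟩
    · obtain ⟨j, hj⟩ := h
      refine ⟨j, Or.inr ?_⟩
      rw [hj]; ring

lemma walk_sum_formula {d : ℕ} {F : Set (Fin d → ℤ)} {pm : Finset (Fin d → ℤ)}
    (Ffin : F.Finite) (hsub : ∀ u ∈ F, ∀ v ∈ F, v - u ∈ (pm : Set (Fin d → ℤ)))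
    (f : (Fin d → ℤ) → ℝ) {u : Fin d → ℤ} (hu : u ∈ F) :
    ∑ mvv ∈ pm, (if u + mvv ∈ F then f (u + mvv) else f u)
      = (∑ v ∈ Ffin.toFinset, f v) + ((pm.card : ℝ) - (F.ncard : ℝ)) * f u := by
  classical
  have hmaps : ∀ mvv ∈ pm.filter (fun mvv => u + mvv ∈ F), u + mvv ∈ Ffin.toFinset := by
    intro mvv hm; exact Ffin.mem_toFinset.mpr (Finset.mem_filter.mp hm).2
  have hmaps' : ∀ v ∈ Ffin.toFinset, v - u ∈ pm.filter (fun mvv => u + mvv ∈ F) := by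
    intro v hv
    have hvF := Ffin.mem_toFinset.mp hv
    refine Finset.mem_filter.mpr ⟨?_, ?_⟩
    · exact_mod_cast hsub u hu v hvF
    · simpa using hvF
  have hcard : (pm.filter (fun mvv => u + mvv ∈ F)).card = F.ncard := by
    rw [Set.ncard_eq_toFinset_card F Ffin]
    refine Finset.card_nbij (fun mvv => u + mvv) hmaps ?_ ?_
    · intro a _ b _ hab
      exact add_left_cancel hab
    · intro v hv
      refine ⟨v - u, ?_, add_sub_cancel u v⟩
      exact hmaps' v (by exact_mod_cast hv)
  have h1 : ∑ mvv ∈ pm.filter (fun mvv => u + mvv ∈ F),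
        (if u + mvv ∈ F then f (u + mvv) else f u) = ∑ v ∈ Ffin.toFinset, f v := by
    rw [Finset.sum_congr rfl (fun mvv hm => if_pos (Finset.mem_filter.mp hm).2)]
    exact Finset.sum_nbij' (fun mvv => u + mvv) (fun v => v - u) hmaps hmaps'
      (fun a _ => add_sub_cancel_left u a) (fun v _ => add_sub_cancel u v)
      (fun a _ => rfl)
  have h2 : ∑ mvv ∈ pm.filter (fun mvv => ¬ (u + mvv ∈ F)),
        (if u + mvv ∈ F then f (u + mvv) else f u)
      = ((pm.card : ℝ) - (F.ncard : ℝ)) * f u := by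
    rw [Finset.sum_congr rfl (fun mvv hm => if_neg (Finset.mem_filter.mp hm).2),
      Finset.sum_const, nsmul_eq_mul]
    congr 1
    have hc := Finset.card_filter_add_card_filter_not
      (s := pm) (fun mvv => u + mvv ∈ F)
    have hle : (pm.filter (fun mvv => u + mvv ∈ F)).card ≤ pm.card :=
      Finset.card_filter_le _ _
    have h3 : (pm.filter (fun mvv => ¬ (u + mvv ∈ F))).card
        = pm.card - (pm.filter (fun mvv => u + mvv ∈ F)).card := by omega
    rw [h3, Nat.cast_sub hle, hcard]
  rw [← Finset.sum_filter_add_sum_filter_not pm (fun mvv => u + mvv ∈ F), h1, h2]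

set_option maxHeartbeats 1000000 in
/-- If `|𝓕_{A,b_i}| ∈ Ω(i^r)` and `|𝓜^{b_i}| ∈ O(i^r)`, where `𝓜^{b} = 𝓜(diam 𝓕_{A,b}(𝓜))`
is the adapted Markov basis, then the fiber graphs with adapted moves form an expander:
the SLEM equals `1 − |𝓕_{A,b_i}|/|𝓜^{b_i}|` and is uniformly bounded away from `1`. -/
theorem stmt18 (m d k : ℕ) (A : Matrix (Fin m) (Fin d) ℤ)
    (hker : ∀ u : Fin d → ℤ, A.mulVec u = 0 → (∀ j, 0 ≤ u j) → u = 0)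
    (mv : Fin k → (Fin d → ℤ)) (hmv : ∀ j, A.mulVec (mv j) = 0)
    (hMarkov : ∀ b : Fin m → ℤ, (fiberE m d A b).Nonempty →
      ∀ u ∈ fiberE m d A b, ∀ v ∈ fiberE m d A b,
        Relation.ReflTransGen (stepRelE d (fiberE m d A b) (Set.range mv)) u v)
    (b : ℕ → Fin m → ℤ) (hb : ∀ i, (fiberE m d A (b i)).Nonempty)
    (Mad : ℕ → Finset (Fin d → ℤ))
    (hMad : ∀ i, (Mad i : Set (Fin d → ℤ)) =
      Mpow d k mv (walkDiamE d (fiberE m d A (b i)) (Set.range mv)))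
    (r : ℕ)
    (c₁ : ℝ) (hc₁ : 0 < c₁) (i₁ : ℕ)
    (hΩ : ∀ i : ℕ, i₁ ≤ i → c₁ * (i : ℝ) ^ r ≤ ((fiberE m d A (b i)).ncard : ℝ))
    (c₂ : ℝ) (i₂ : ℕ)
    (hO : ∀ i : ℕ, i₂ ≤ i → ((Mad i).card : ℝ) ≤ c₂ * (i : ℝ) ^ r) :
    (∀ i : ℕ, slemE d (fiberE m d A (b i)) (Mad i) =
      1 - ((fiberE m d A (b i)).ncard : ℝ) / ((Mad i).card : ℝ)) ∧
    ∃ ε : ℝ, 0 < ε ∧ ∀ i : ℕ, slemE d (fiberE m d A (b i)) (Mad i) ≤ 1 - ε := by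
  classical
  have main : ∀ i : ℕ, slemE d (fiberE m d A (b i)) (Mad i) =
      1 - ((fiberE m d A (b i)).ncard : ℝ) / ((Mad i).card : ℝ) := by
    intro i
    set F := fiberE m d A (b i) with hFdef
    set pm := Mad i with hpmdef
    have Ffin : F.Finite := fiberE_finite hker (b i)
    have hFne : F.Nonempty := hb i
    have hTfin : {n : ℕ | ∃ u ∈ F, ∃ v ∈ F, n = walkDistE d F (Set.range mv) u v}.Finite := by
      have himg : {n : ℕ | ∃ u ∈ F, ∃ v ∈ F, n = walkDistE d F (Set.range mv) u v}
          = (fun p : (Fin d → ℤ) × (Fin d → ℤ) =>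
              walkDistE d F (Set.range mv) p.1 p.2) '' (F ×ˢ F) := by
        ext n
        constructor
        · rintro ⟨u, hu, v, hv, rfl⟩; exact ⟨(u, v), ⟨hu, hv⟩, rfl⟩
        · rintro ⟨⟨u, v⟩, ⟨hu, hv⟩, rfl⟩; exact ⟨u, hu, v, hv, rfl⟩
      rw [himg]; exact (Ffin.prod Ffin).image _
    have hsub : ∀ u ∈ F, ∀ v ∈ F, v - u ∈ (pm : Set (Fin d → ℤ)) := by
      intro u hu v hv
      obtain ⟨n, g, hg0, hgn, hgs⟩ := rtg_path (hMarkov (b i) hFne u hu v hv)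
      have hne : {n : ℕ | ∃ f : ℕ → (Fin d → ℤ), f 0 = u ∧ f n = v ∧
          ∀ t < n, stepRelE d F (Set.range mv) (f t) (f (t + 1))}.Nonempty :=
        ⟨n, g, hg0, hgn, hgs⟩
      obtain ⟨g', hg'0, hg'n, hg's⟩ :
          ∃ f : ℕ → (Fin d → ℤ), f 0 = u ∧ f (walkDistE d F (Set.range mv) u v) = v ∧
            ∀ t < walkDistE d F (Set.range mv) u v,
              stepRelE d F (Set.range mv) (f t) (f (t + 1)) := Nat.sInf_mem hne
      have hMem : v - u ∈ Mpow d k mv (walkDistE d F (Set.range mv) u v) := by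
        have := path_mem_Mpow (walkDistE d F (Set.range mv) u v) g' hg's
        rwa [hg'0, hg'n] at this
      have hdle : walkDistE d F (Set.range mv) u v ≤ walkDiamE d F (Set.range mv) :=
        le_csSup hTfin.bddAbove ⟨u, hu, v, hv, rfl⟩
      rw [hpmdef, hMad i]
      exact Mpow_mono d k mv hdle hMem
    have h0pm : (0 : Fin d → ℤ) ∈ pm := by
      have h : (0 : Fin d → ℤ) ∈ (pm : Set (Fin d → ℤ)) := by
        rw [hpmdef, hMad i]; exact Mpow_zero_mem d k mv _
      exact_mod_cast h
    have hNpos : 0 < pm.card := Finset.card_pos.mpr ⟨0, h0pm⟩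
    have hnpos : 0 < F.ncard := (Set.ncard_pos Ffin).mpr hFne
    have hnN : F.ncard ≤ pm.card := by
      obtain ⟨u₀, hu₀⟩ := hFne
      have himg : (fun v => v - u₀) '' F ⊆ (pm : Set (Fin d → ℤ)) := by
        rintro _ ⟨v, hv, rfl⟩; exact hsub u₀ hu₀ v hv
      have h := Set.ncard_le_ncard himg pm.finite_toSet
      rwa [Set.ncard_image_of_injective F sub_left_injective, Set.ncard_coe_finset] at h
    rcases Nat.lt_or_ge F.ncard 2 with hsmall | hbig
    · -- singleton fiber case
      have hn1 : F.ncard = 1 := by omega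
      obtain ⟨u₀, hFeq⟩ := Set.ncard_eq_one.mp hn1
      have hu₀F : u₀ ∈ F := by rw [hFeq]; rfl
      have hdist0 : walkDistE d F (Set.range mv) u₀ u₀ = 0 := by
        apply Nat.sInf_eq_zero.mpr
        exact Or.inl ⟨fun _ => u₀, rfl, rfl, fun t ht => absurd ht (Nat.not_lt_zero t)⟩
      have hdiam : walkDiamE d F (Set.range mv) = 0 := by
        have hT : {n : ℕ | ∃ u ∈ F, ∃ v ∈ F, n = walkDistE d F (Set.range mv) u v}
            = {0} := by
          ext n
          constructor
          · rintro ⟨u, hu, v, hv, rfl⟩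
            rw [hFeq, Set.mem_singleton_iff] at hu hv
            subst hu; subst hv
            exact hdist0
          · rintro rfl
            exact ⟨u₀, hu₀F, u₀, hu₀F, hdist0.symm⟩
        unfold walkDiamE
        rw [hT]
        exact csSup_singleton 0
      have hpm0 : pm = {0} := by
        apply Finset.coe_injective
        rw [hpmdef, hMad i, hdiam]
        ext x
        simp only [Finset.coe_singleton, Set.mem_singleton_iff]
        constructor
        · rintro ⟨lam, hlam, rfl⟩
          have hz : ∀ j, lam j = 0 := by
            intro j
            have h2 : |lam j| ≤ ∑ j', |lam j'| :=
              Finset.single_le_sum (fun j' _ => abs_nonneg (lam j')) (Finset.mem_univ j)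
            have h3 : |lam j| ≤ 0 := le_trans h2 (by simpa using hlam)
            exact abs_nonpos_iff.mp h3
          rw [Finset.sum_congr rfl (fun j _ => by rw [hz j, zero_smul])]
          exact Finset.sum_const_zero
        · rintro rfl; exact Mpow_zero_mem d k mv 0
      have hEempty : {x : ℝ | ∃ μ, isEigenE d F pm μ ∧ μ ≠ 1 ∧ x = |μ|} = ∅ := by
        ext x
        simp only [Set.mem_setOf_eq, Set.mem_empty_iff_false, iff_false, not_exists]
        rintro μ ⟨⟨f, ⟨u, hu, hfu⟩, hsupp, heig⟩, hμ1, rfl⟩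
        have hcomp : walkOpE d F pm f u = f u := by
          rw [walkOpE, hpm0, Finset.card_singleton, Finset.sum_singleton, add_zero,
            if_pos hu]
          norm_num
        have hfeq := heig u hu
        rw [hcomp] at hfeq
        have h2 : (μ - 1) * f u = 0 := by rw [sub_mul, one_mul]; linarith
        rcases mul_eq_zero.mp h2 with h | h
        · exact hμ1 (by linarith)
        · exact hfu h
      simp only [slemE]
      rw [hEempty, Real.sSup_empty, hn1, hpm0]
      norm_num
    · -- main case: at least two fiber elements
      obtain ⟨u₁, hu₁, u₂, hu₂, hne12⟩ := (Set.one_lt_ncard Ffin).mp hbig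
      set N : ℝ := (pm.card : ℝ) with hNdef
      set nn : ℝ := (F.ncard : ℝ) with hnndef
      have hN0 : (0:ℝ) < N := by rw [hNdef]; exact_mod_cast hNpos
      have hn0 : (0:ℝ) < nn := by rw [hnndef]; exact_mod_cast hnpos
      have hnnN : nn ≤ N := by rw [hNdef, hnndef]; exact_mod_cast hnN
      set μ₀ : ℝ := 1 - nn / N with hμ₀
      have hμ₀nonneg : 0 ≤ μ₀ := by
        have h1 : nn / N ≤ 1 := div_le_one_of_le₀ hnnN (le_of_lt hN0)
        rw [hμ₀]; linarith
      have hμ₀ne1 : μ₀ ≠ 1 := by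
        have hpos : 0 < nn / N := div_pos hn0 hN0
        rw [hμ₀]; intro h; linarith
      have hcardT : Ffin.toFinset.card = F.ncard := (Set.ncard_eq_toFinset_card F Ffin).symm
      have hop : ∀ f : (Fin d → ℤ) → ℝ, ∀ u ∈ F, walkOpE d F pm f u
          = N⁻¹ * ((∑ v ∈ Ffin.toFinset, f v) + (N - nn) * f u) := by
        intro f u hu
        rw [walkOpE, walk_sum_formula Ffin hsub f hu]
      have hset : {x : ℝ | ∃ μ, isEigenE d F pm μ ∧ μ ≠ 1 ∧ x = |μ|} = {μ₀} := by
        ext x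
        simp only [Set.mem_setOf_eq, Set.mem_singleton_iff]
        constructor
        · rintro ⟨μ, ⟨f, ⟨u, hu, hfu⟩, hsupp, heig⟩, hμ1, rfl⟩
          set S : ℝ := ∑ v ∈ Ffin.toFinset, f v with hS
          have heq : ∀ w ∈ F, N⁻¹ * (S + (N - nn) * f w) = μ * f w := by
            intro w hw; rw [← hop f w hw]; exact heig w hw
          have hsum1 : ∑ w ∈ Ffin.toFinset, (N⁻¹ * (S + (N - nn) * f w))
              = ∑ w ∈ Ffin.toFinset, (μ * f w) :=
            Finset.sum_congr rfl fun w hw => heq w (Ffin.mem_toFinset.mp hw)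
          have hL : ∑ w ∈ Ffin.toFinset, (N⁻¹ * (S + (N - nn) * f w)) = S := by
            rw [← Finset.mul_sum, Finset.sum_add_distrib, Finset.sum_const,
              ← Finset.mul_sum, hcardT, nsmul_eq_mul, ← hS, ← hnndef]
            field_simp
            ring
          have hR : ∑ w ∈ Ffin.toFinset, (μ * f w) = μ * S := by
            rw [← Finset.mul_sum, ← hS]
          have hS0 : S = 0 := by
            have h1 : S = μ * S := by
              calc S = ∑ w ∈ Ffin.toFinset, (N⁻¹ * (S + (N - nn) * f w)) := hL.symm
                _ = ∑ w ∈ Ffin.toFinset, (μ * f w) := hsum1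
                _ = μ * S := hR
            have h2 : (1 - μ) * S = 0 := by rw [sub_mul, one_mul]; linarith
            rcases mul_eq_zero.mp h2 with h | h
            · exact absurd (by linarith : μ = 1) hμ1
            · exact h
          have h3 := heq u hu
          rw [hS0, zero_add, ← mul_assoc] at h3
          have h4 : N⁻¹ * (N - nn) = μ := mul_right_cancel₀ hfu h3
          have h5 : N⁻¹ * (N - nn) = μ₀ := by
            rw [hμ₀]; field_simp
          rw [← h4, h5, abs_of_nonneg hμ₀nonneg]
        · rintro rfl
          refine ⟨μ₀, ?_, hμ₀ne1, (abs_of_nonneg hμ₀nonneg).symm⟩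
          set f : (Fin d → ℤ) → ℝ :=
            fun x => (if x = u₁ then (1:ℝ) else 0) - (if x = u₂ then 1 else 0) with hf
          have hfu₁ : f u₁ = 1 := by simp [hf, hne12]
          refine ⟨f, ⟨u₁, hu₁, by rw [hfu₁]; norm_num⟩, ?_, ?_⟩
          · intro u hu
            have h1 : u ≠ u₁ := fun h => hu (h ▸ hu₁)
            have h2 : u ≠ u₂ := fun h => hu (h ▸ hu₂)
            simp [hf, h1, h2]
          · intro u hu
            have hSf : ∑ v ∈ Ffin.toFinset, f v = 0 := by
              simp only [hf]
              rw [Finset.sum_sub_distrib,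
                Finset.sum_ite_eq' Ffin.toFinset u₁ (fun _ => (1:ℝ)),
                Finset.sum_ite_eq' Ffin.toFinset u₂ (fun _ => (1:ℝ)),
                if_pos (Ffin.mem_toFinset.mpr hu₁), if_pos (Ffin.mem_toFinset.mpr hu₂)]
              ring
            rw [hop f u hu, hSf, zero_add, hμ₀]
            field_simp
      simp only [slemE]
      rw [hset, csSup_singleton]
  refine ⟨main, ?_⟩
  have hnpos : ∀ i, (0:ℝ) < ((fiberE m d A (b i)).ncard : ℝ) := by
    intro i
    have Ffin := fiberE_finite hker (b i)
    exact_mod_cast (Set.ncard_pos Ffin).mpr (hb i)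
  have hNpos : ∀ i, (0:ℝ) < ((Mad i).card : ℝ) := by
    intro i
    have h0 : (0 : Fin d → ℤ) ∈ Mad i := by
      have h : (0 : Fin d → ℤ) ∈ (Mad i : Set (Fin d → ℤ)) := by
        rw [hMad i]; exact Mpow_zero_mem d k mv _
      exact_mod_cast h
    exact_mod_cast Finset.card_pos.mpr ⟨0, h0⟩
  set g : ℕ → ℝ := fun i => ((fiberE m d A (b i)).ncard : ℝ) / ((Mad i).card : ℝ) with hg
  have hgpos : ∀ i, 0 < g i := fun i => div_pos (hnpos i) (hNpos i)
  set i₀ : ℕ := max (max i₁ i₂) 1 with hi₀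
  have hi₀pos : 0 < i₀ := lt_of_lt_of_le one_pos (le_max_right _ _)
  have hc₂pos : 0 < c₂ := by
    have h1 := hO i₀ (le_trans (le_max_right i₁ i₂) (le_max_left _ _))
    have h2 : (0:ℝ) < (i₀:ℝ)^r := by
      have : (0:ℝ) < (i₀:ℝ) := by exact_mod_cast hi₀pos
      positivity
    nlinarith [hNpos i₀]
  have hbound : ∀ i, i₀ ≤ i → c₁ / c₂ ≤ g i := by
    intro i hi
    have hipos : (0:ℝ) < (i:ℝ) := by exact_mod_cast lt_of_lt_of_le hi₀pos hi
    have hir : (0:ℝ) < (i:ℝ)^r := by positivity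
    have h1 := hΩ i (le_trans (le_trans (le_max_left i₁ i₂) (le_max_left _ _)) hi)
    have h2 := hO i (le_trans (le_trans (le_max_right i₁ i₂) (le_max_left _ _)) hi)
    have h3 : c₁ * (i:ℝ)^r / (c₂ * (i:ℝ)^r) ≤ g i :=
      div_le_div₀ (le_of_lt (hnpos i)) h1 (hNpos i) h2
    calc c₁ / c₂ = c₁ * (i:ℝ)^r / (c₂ * (i:ℝ)^r) := by
          rw [mul_div_mul_right _ _ (ne_of_gt hir)]
      _ ≤ g i := h3
  have hTne : (Finset.range i₀).Nonempty := ⟨0, Finset.mem_range.mpr hi₀pos⟩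
  refine ⟨min (c₁ / c₂) ((Finset.range i₀).inf' hTne g), ?_, ?_⟩
  · apply lt_min (div_pos hc₁ hc₂pos)
    exact (Finset.lt_inf'_iff hTne).mpr fun j _ => hgpos j
  · intro i
    rw [main i]
    have hεg : min (c₁ / c₂) ((Finset.range i₀).inf' hTne g) ≤ g i := by
      rcases Nat.lt_or_ge i i₀ with h | h
      · exact le_trans (min_le_right _ _) (Finset.inf'_le g (Finset.mem_range.mpr h))
      · exact le_trans (min_le_left _ _) (hbound i h)
    have hgi : g i = ((fiberE m d A (b i)).ncard : ℝ) / ((Mad i).card : ℝ) := rfl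
    rw [hgi] at hεg
    linarith
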